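/- For any ambiguous shattered H-tree T, there exists an ambiguous H-subtree T' of T such that every leaf u of T' has exactly Rank(T) edges relevant to u in T'. (Uniform-rank pruning.) -/

import Mathlib

/-- A finite rooted tree: vertices, a root, and a parent map under which every
vertex reaches the root. -/
structure RTree where
  V : Type
  [fin : Fintype V]
  root : V
  parent : V → V
  parent_root : parent root = root
  reaches : ∀ v : V, ∃ k : ℕ, parent^[k] v = root

namespace RTree

/-- Children of a vertex (the root is not a child of anything). -/
def children (t : RTree) (v : t.V) : Set t.V := {w | t.parent w = v ∧ w ≠ t.root}

def IsLeaf (t : RTree) (v : t.V) : Prop := t.children v = ∅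

/-- `a` is an ancestor (or equal to) `u`. -/
def Anc (t : RTree) (a u : t.V) : Prop := ∃ k : ℕ, t.parent^[k] u = a

noncomputable def depthOf (t : RTree) (v : t.V) : ℕ := sInf {k : ℕ | t.parent^[k] v = t.root}

noncomputable def depth (t : RTree) : ℕ := sSup {n : ℕ | ∃ v : t.V, n = t.depthOf v}

end RTree

namespace RTree

variable (t : RTree)

lemma iterate_root (k : ℕ) : t.parent^[k] t.root = t.root :=
  Function.iterate_fixed t.parent_root k

lemma anc_refl (v : t.V) : t.Anc v v := ⟨0, rfl⟩

lemma anc_trans {a b c : t.V} (h1 : t.Anc a b) (h2 : t.Anc b c) : t.Anc a c := by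
  obtain ⟨k, hk⟩ := h1; obtain ⟨l, hl⟩ := h2
  exact ⟨k + l, by rw [Function.iterate_add_apply, hl, hk]⟩

lemma anc_root_eq {a : t.V} (h : t.Anc a t.root) : a = t.root := by
  obtain ⟨k, hk⟩ := h; rw [t.iterate_root] at hk; exact hk.symm

lemma eq_root_of_cycle {v : t.V} {k : ℕ} (hk : 1 ≤ k) (h : t.parent^[k] v = v) :
    v = t.root := by
  obtain ⟨m, hm⟩ := t.reaches v
  have hiter : ∀ n, t.parent^[k * n] v = v := by
    intro n
    induction n with
    | zero => simp
    | succ n ih => rw [Nat.mul_succ, Function.iterate_add_apply, h, ih]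
  have h2 := hiter m
  have hge : m ≤ k * m := Nat.le_mul_of_pos_left m hk
  rw [show k * m = (k * m - m) + m by omega, Function.iterate_add_apply, hm,
    t.iterate_root] at h2
  exact h2.symm

lemma anc_step {a v : t.V} (h : t.Anc a v) : a = v ∨ t.Anc a (t.parent v) := by
  obtain ⟨k, hk⟩ := h
  cases k with
  | zero => exact Or.inl hk.symm
  | succ k =>
    right
    exact ⟨k, by rw [← Function.iterate_succ_apply]; exact hk⟩

lemma anc_of_parent {a v : t.V} (h : t.Anc a (t.parent v)) : t.Anc a v := by
  obtain ⟨k, hk⟩ := h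
  exact ⟨k + 1, by rw [Function.iterate_succ_apply]; exact hk⟩

lemma anc_antisymm {a b : t.V} (h1 : t.Anc a b) (h2 : t.Anc b a) : a = b := by
  obtain ⟨k, hk⟩ := h1; obtain ⟨l, hl⟩ := h2
  rcases Nat.eq_zero_or_pos k with h0 | hpos
  · subst h0; exact hk.symm
  · have : t.parent^[k + l] a = a := by
      rw [Function.iterate_add_apply, hl, hk]
    have hb : a = t.root := t.eq_root_of_cycle (by omega) this
    subst hb
    rw [t.iterate_root] at hl
    exact hl

/-- `v` lies strictly below `u₀`. -/
def SBelow (u₀ v : t.V) : Prop := t.Anc u₀ v ∧ v ≠ u₀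

variable {t} {u₀ : t.V}

lemma kept_root : ¬ t.SBelow u₀ t.root := by
  rintro ⟨h1, h2⟩
  exact h2 (t.anc_root_eq h1).symm

lemma kept_parent {v : t.V} (hv : ¬ t.SBelow u₀ v) : ¬ t.SBelow u₀ (t.parent v) := by
  rintro ⟨h1, h2⟩
  by_cases hvu : v = u₀
  · subst hvu
    obtain ⟨k, hk⟩ := h1
    have : t.parent^[k + 1] v = v := by rw [Function.iterate_succ_apply]; exact hk
    have hroot : v = t.root := t.eq_root_of_cycle (by omega) this
    exact h2 (by rw [hroot, t.parent_root, ← hroot])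
  · exact hv ⟨t.anc_of_parent h1, hvu⟩

lemma kept_anc {v a : t.V} (hv : ¬ t.SBelow u₀ v) (h : t.Anc a v) : ¬ t.SBelow u₀ a := by
  rintro ⟨h1, h2⟩
  by_cases hvu : v = u₀
  · subst hvu
    exact h2 (t.anc_antisymm h1 h).symm
  · exact hv ⟨t.anc_trans h1 h, hvu⟩

lemma kept_child {v c : t.V} (hv : ¬ t.SBelow u₀ v) (hvu : v ≠ u₀)
    (hc : t.parent c = v) (_hcr : c ≠ t.root) : ¬ t.SBelow u₀ c := by
  rintro ⟨h1, h2⟩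
  rcases t.anc_step h1 with h | h
  · exact h2 h.symm
  · rw [hc] at h
    exact hv ⟨h, hvu⟩

lemma notkept_child_u0 {c : t.V} (hc : t.parent c = u₀) (hcr : c ≠ t.root) :
    t.SBelow u₀ c := by
  refine ⟨⟨1, by simpa using hc⟩, ?_⟩
  intro h
  subst h
  exact hcr (t.eq_root_of_cycle le_rfl (by simpa using hc))

lemma kept_sib {a b : t.V} (ha : ¬ t.SBelow u₀ a) (har : a ≠ t.root)
    (hb : t.parent b = t.parent a) (hbr : b ≠ t.root) : ¬ t.SBelow u₀ b := by
  rintro ⟨h1, h2⟩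
  rcases t.anc_step h1 with h | h
  · exact h2 h.symm
  · rw [hb] at h
    by_cases hpa : t.parent a = u₀
    · exact ha (notkept_child_u0 hpa har)
    · exact (kept_parent ha) ⟨h, hpa⟩

end RTree

namespace RTree

variable (t : RTree) (u₀ : t.V)

/-- The rooted tree obtained by deleting all strict descendants of `u₀`. -/
noncomputable def truncT : RTree where
  V := {v : t.V // ¬ t.SBelow u₀ v}
  fin := by classical exact @Subtype.fintype _ _ (Classical.decPred _) t.fin
  root := ⟨t.root, kept_root⟩
  parent v := ⟨t.parent v.1, kept_parent v.2⟩
  parent_root := Subtype.ext t.parent_root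
  reaches := by
    have key : ∀ (k : ℕ) (v : {v : t.V // ¬ t.SBelow u₀ v}),
        ((fun v : {v : t.V // ¬ t.SBelow u₀ v} => (⟨t.parent v.1, kept_parent v.2⟩ :
          {v : t.V // ¬ t.SBelow u₀ v}))^[k] v).1 = t.parent^[k] v.1 := by
      intro k
      induction k with
      | zero => intro v; rfl
      | succ k ih =>
        intro v
        rw [Function.iterate_succ_apply', Function.iterate_succ_apply']
        simp only [ih v]
    intro v
    obtain ⟨k, hk⟩ := t.reaches v.1
    exact ⟨k, Subtype.ext (by rw [key]; exact hk)⟩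

variable {t u₀}

lemma truncT_parent_val (v : (t.truncT u₀).V) :
    ((t.truncT u₀).parent v).1 = t.parent v.1 := rfl

lemma truncT_root_val : ((t.truncT u₀).root).1 = t.root := rfl

lemma truncT_iterate_val (k : ℕ) (v : (t.truncT u₀).V) :
    ((t.truncT u₀).parent^[k] v).1 = t.parent^[k] v.1 := by
  induction k with
  | zero => rfl
  | succ k ih =>
    rw [Function.iterate_succ_apply', Function.iterate_succ_apply',
      truncT_parent_val, ih]

lemma truncT_anc_iff {a v : (t.truncT u₀).V} :
    (t.truncT u₀).Anc a v ↔ t.Anc a.1 v.1 := by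
  constructor
  · rintro ⟨k, hk⟩
    exact ⟨k, by rw [← truncT_iterate_val, hk]⟩
  · rintro ⟨k, hk⟩
    exact ⟨k, Subtype.ext (by rw [truncT_iterate_val]; exact hk)⟩

lemma truncT_ne_root_iff {v : (t.truncT u₀).V} :
    v ≠ (t.truncT u₀).root ↔ v.1 ≠ t.root := by
  constructor
  · intro h h'
    exact h (Subtype.ext h')
  · intro h h'
    exact h (congrArg Subtype.val h')

lemma truncT_children_iff {c v : (t.truncT u₀).V} :
    c ∈ (t.truncT u₀).children v ↔ c.1 ∈ t.children v.1 := by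
  unfold children
  simp only [Set.mem_setOf_eq]
  exact ⟨fun h => ⟨congrArg Subtype.val h.1, truncT_ne_root_iff.1 h.2⟩,
    fun h => ⟨Subtype.ext h.1, truncT_ne_root_iff.2 h.2⟩⟩

lemma truncT_leaf_iff {v : (t.truncT u₀).V} :
    (t.truncT u₀).IsLeaf v ↔ (v.1 = u₀ ∨ t.IsLeaf v.1) := by
  unfold IsLeaf
  constructor
  · intro h
    by_cases hvu : v.1 = u₀
    · exact Or.inl hvu
    · right
      rw [Set.eq_empty_iff_forall_notMem] at h ⊢
      intro c hc
      have hck : ¬ t.SBelow u₀ c := kept_child v.2 hvu hc.1 hc.2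
      exact h ⟨c, hck⟩ (truncT_children_iff.2 hc)
  · intro h
    rw [Set.eq_empty_iff_forall_notMem]
    intro c hc
    rw [truncT_children_iff] at hc
    rcases h with h | h
    · rw [h] at hc
      exact c.2 (notkept_child_u0 hc.1 hc.2)
    · rw [Set.eq_empty_iff_forall_notMem] at h
      exact h c.1 hc

end RTree


/-- An ambiguous shattered `H`-tree: internal vertices carry instances, non-root
vertices (identified with the edges to their parents) carry labels, distinct among
siblings, leaves carry hypotheses from `H` compatible with all edge labels above
them, and `E0` selects exactly one child edge of each internal vertex. -/
structure AmbTree (X Y : Type) (H : Set (X → Set Y)) where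
  t : RTree
  xlab : t.V → X
  ylab : t.V → Y
  hlab : t.V → (X → Set Y)
  E0 : Set t.V
  e0_ne_root : ∀ a ∈ E0, a ≠ t.root
  e0_unique : ∀ v : t.V, (t.children v).Nonempty → ∃! a : t.V, a ∈ t.children v ∩ E0
  sib_distinct : ∀ a b : t.V, a ≠ t.root → b ≠ t.root →
    t.parent a = t.parent b → a ≠ b → ylab a ≠ ylab b
  hlab_mem : ∀ u : t.V, t.IsLeaf u → hlab u ∈ H
  path_mem : ∀ u a : t.V, t.IsLeaf u → t.Anc a u → a ≠ t.root →
    ylab a ∈ hlab u (xlab (t.parent a))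

namespace AmbTree

variable {X Y : Type} {H : Set (X → Set Y)}

/-- Edge `a` (on the root-to-`u` path) is relevant to leaf `u`. -/
def Relevant (T : AmbTree X Y H) (a u : T.t.V) : Prop :=
  a ≠ T.t.root ∧ T.t.Anc a u ∧
    (a ∉ T.E0 ∨ ∃ b : T.t.V, T.t.parent b = T.t.parent a ∧ b ≠ T.t.root ∧
      T.ylab b ∉ T.hlab u (T.xlab (T.t.parent a)))

noncomputable def relCount (T : AmbTree X Y H) (u : T.t.V) : ℕ :=
  {a : T.t.V | T.Relevant a u}.ncard

/-- Rank: the minimum over leaves of the number of relevant edges. -/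
noncomputable def rank (T : AmbTree X Y H) : ℕ :=
  sInf {n : ℕ | ∃ u : T.t.V, T.t.IsLeaf u ∧ n = T.relCount u}

noncomputable def depth (T : AmbTree X Y H) : ℕ := T.t.depth

end AmbTree

/-- `T'` is a pruned subtree of `T`: an injective embedding commuting with parents
(no contraction), preserving root, instance/edge labels and `E0`-membership, where
each leaf of `T'` takes its hypothesis label from some leaf of `T` below it. -/
def AmbTree.IsPrunedSubtree {X Y : Type} {H : Set (X → Set Y)} (T' T : AmbTree X Y H) : Prop :=
  ∃ e : T'.t.V → T.t.V, Function.Injective e ∧ e T'.t.root = T.t.root ∧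
    (∀ v : T'.t.V, v ≠ T'.t.root → e (T'.t.parent v) = T.t.parent (e v)) ∧
    (∀ v : T'.t.V, ¬ T'.t.IsLeaf v → T'.xlab v = T.xlab (e v)) ∧
    (∀ v : T'.t.V, v ≠ T'.t.root → T'.ylab v = T.ylab (e v)) ∧
    (∀ v : T'.t.V, v ∈ T'.E0 ↔ e v ∈ T.E0) ∧
    (∀ u : T'.t.V, T'.t.IsLeaf u → ∃ w : T.t.V, T.t.IsLeaf w ∧ T.t.Anc (e u) w ∧
      T'.hlab u = T.hlab w)


namespace AmbTree

variable {X Y : Type} {H : Set (X → Set Y)}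

open Classical in
/-- Truncate an ambiguous tree at `u₀`, which becomes a leaf labelled by the
hypothesis of the original leaf `w₀` below it. -/
noncomputable def trunc (T : AmbTree X Y H) (u₀ w₀ : T.t.V)
    (hw : T.t.IsLeaf w₀) (hanc : T.t.Anc u₀ w₀) : AmbTree X Y H where
  t := T.t.truncT u₀
  xlab v := T.xlab v.1
  ylab v := T.ylab v.1
  hlab v := if v.1 = u₀ then T.hlab w₀ else T.hlab v.1
  E0 := {v | v.1 ∈ T.E0}
  e0_ne_root := by
    intro a ha
    rw [RTree.truncT_ne_root_iff]
    exact T.e0_ne_root a.1 ha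
  e0_unique := by
    intro v hv
    obtain ⟨c, hc⟩ := hv
    rw [RTree.truncT_children_iff] at hc
    have hvu : v.1 ≠ u₀ := by
      intro h
      rw [h] at hc
      exact c.2 (RTree.notkept_child_u0 hc.1 hc.2)
    obtain ⟨a, ⟨hac, haE⟩, huniq⟩ := T.e0_unique v.1 ⟨c.1, hc⟩
    have hak : ¬ T.t.SBelow u₀ a := RTree.kept_child v.2 hvu hac.1 hac.2
    refine ⟨⟨a, hak⟩, ⟨RTree.truncT_children_iff.2 hac, haE⟩, ?_⟩
    rintro b ⟨hbc, hbE⟩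
    exact Subtype.ext (huniq b.1 ⟨RTree.truncT_children_iff.1 hbc, hbE⟩)
  sib_distinct := by
    intro a b har hbr hpar hne
    rw [RTree.truncT_ne_root_iff] at har hbr
    exact T.sib_distinct a.1 b.1 har hbr
      (by rw [← RTree.truncT_parent_val, ← RTree.truncT_parent_val, hpar])
      (fun h => hne (Subtype.ext h))
  hlab_mem := by
    intro u hu
    show (if u.1 = u₀ then T.hlab w₀ else T.hlab u.1) ∈ H
    by_cases h : u.1 = u₀
    · rw [if_pos h]
      exact T.hlab_mem w₀ hw
    · rw [if_neg h]
      rcases RTree.truncT_leaf_iff.1 hu with h' | h'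
      · exact absurd h' h
      · exact T.hlab_mem u.1 h'
  path_mem := by
    intro u a hu ha har
    rw [RTree.truncT_anc_iff] at ha
    rw [RTree.truncT_ne_root_iff] at har
    show T.ylab a.1 ∈ (if u.1 = u₀ then T.hlab w₀ else T.hlab u.1)
      (T.xlab (T.t.parent a.1))
    by_cases h : u.1 = u₀
    · rw [if_pos h]
      rw [h] at ha
      exact T.path_mem w₀ a.1 hw (T.t.anc_trans ha hanc) har
    · rw [if_neg h]
      rcases RTree.truncT_leaf_iff.1 hu with h' | h'
      · exact absurd h' h
      · exact T.path_mem u.1 a.1 h' ha har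

variable {T : AmbTree X Y H} {u₀ w₀ : T.t.V} {hw : T.t.IsLeaf w₀} {hanc : T.t.Anc u₀ w₀}

lemma trunc_ne_root_iff {v : (T.trunc u₀ w₀ hw hanc).t.V} :
    v ≠ (T.trunc u₀ w₀ hw hanc).t.root ↔ v.1 ≠ T.t.root :=
  RTree.truncT_ne_root_iff

lemma trunc_anc_iff {a v : (T.trunc u₀ w₀ hw hanc).t.V} :
    (T.trunc u₀ w₀ hw hanc).t.Anc a v ↔ T.t.Anc a.1 v.1 :=
  RTree.truncT_anc_iff

lemma trunc_parent_val (v : (T.trunc u₀ w₀ hw hanc).t.V) :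
    ((T.trunc u₀ w₀ hw hanc).t.parent v).1 = T.t.parent v.1 := rfl

lemma trunc_leaf_iff {v : (T.trunc u₀ w₀ hw hanc).t.V} :
    (T.trunc u₀ w₀ hw hanc).t.IsLeaf v ↔ (v.1 = u₀ ∨ T.t.IsLeaf v.1) :=
  RTree.truncT_leaf_iff

open Classical in
lemma trunc_hlab_pos {v : (T.trunc u₀ w₀ hw hanc).t.V} (h : v.1 = u₀) :
    (T.trunc u₀ w₀ hw hanc).hlab v = T.hlab w₀ := by
  show (if v.1 = u₀ then T.hlab w₀ else T.hlab v.1) = T.hlab w₀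
  rw [if_pos h]

open Classical in
lemma trunc_hlab_neg {v : (T.trunc u₀ w₀ hw hanc).t.V} (h : v.1 ≠ u₀) :
    (T.trunc u₀ w₀ hw hanc).hlab v = T.hlab v.1 := by
  show (if v.1 = u₀ then T.hlab w₀ else T.hlab v.1) = T.hlab v.1
  rw [if_neg h]

lemma trunc_isPruned : (T.trunc u₀ w₀ hw hanc).IsPrunedSubtree T := by
  refine ⟨Subtype.val, Subtype.val_injective, rfl, fun v _ => rfl, fun v _ => rfl,
    fun v _ => rfl, fun v => Iff.rfl, ?_⟩
  intro u hu
  by_cases h : u.1 = u₀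
  · refine ⟨w₀, hw, ?_, ?_⟩
    · rw [h]; exact hanc
    · exact trunc_hlab_pos h
  · rcases RTree.truncT_leaf_iff.1 hu with h' | h'
    · exact absurd h' h
    · exact ⟨u.1, h', T.t.anc_refl u.1, trunc_hlab_neg h⟩

/-- Core transfer of relevant-edge sets for leaves of the truncated tree. -/
lemma trunc_relCount_core (u : (T.trunc u₀ w₀ hw hanc).t.V) (z : T.t.V)
    (hz : T.t.IsLeaf z) (hanz : T.t.Anc u.1 z)
    (hlabeq : (T.trunc u₀ w₀ hw hanc).hlab u = T.hlab z) :
    (T.trunc u₀ w₀ hw hanc).relCount u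
      = {a : T.t.V | T.Relevant a z ∧ T.t.Anc a u.1}.ncard := by
  have himg : Subtype.val '' {a | (T.trunc u₀ w₀ hw hanc).Relevant a u}
      = {a : T.t.V | T.Relevant a z ∧ T.t.Anc a u.1} := by
    ext a
    constructor
    · rintro ⟨a', ⟨har, hancu, hrel⟩, rfl⟩
      replace har := trunc_ne_root_iff.1 har
      replace hancu := trunc_anc_iff.1 hancu
      refine ⟨⟨har, T.t.anc_trans hancu hanz, ?_⟩, hancu⟩
      rcases hrel with hrel | ⟨b, hb1, hb2, hb3⟩
      · exact Or.inl hrel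
      · right
        refine ⟨b.1, ?_, trunc_ne_root_iff.1 hb2, ?_⟩
        · exact congrArg Subtype.val hb1
        · rw [hlabeq] at hb3
          exact hb3
    · rintro ⟨⟨har, _hancz, hrel⟩, hancu⟩
      have hak : ¬ T.t.SBelow u₀ a := RTree.kept_anc u.2 hancu
      refine ⟨⟨a, hak⟩, ⟨trunc_ne_root_iff.2 har,
        trunc_anc_iff.2 hancu, ?_⟩, rfl⟩
      rcases hrel with hrel | ⟨b, hb1, hb2, hb3⟩
      · exact Or.inl hrel
      · right
        have hbk : ¬ T.t.SBelow u₀ b := RTree.kept_sib hak har hb1 hb2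
        have hpar : (T.trunc u₀ w₀ hw hanc).t.parent ⟨b, hbk⟩
            = (T.trunc u₀ w₀ hw hanc).t.parent ⟨a, hak⟩ := Subtype.ext hb1
        refine ⟨⟨b, hbk⟩, hpar, trunc_ne_root_iff.2 hb2, ?_⟩
        rw [hlabeq]
        exact hb3
  calc (T.trunc u₀ w₀ hw hanc).relCount u
      = (Subtype.val '' {a | (T.trunc u₀ w₀ hw hanc).Relevant a u}).ncard :=
        (Set.ncard_image_of_injective _ Subtype.val_injective).symm
    _ = _ := by rw [himg]

lemma trunc_relCount_u0 (u : (T.trunc u₀ w₀ hw hanc).t.V) (h : u.1 = u₀) :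
    (T.trunc u₀ w₀ hw hanc).relCount u
      = {a : T.t.V | T.Relevant a w₀ ∧ T.t.Anc a u₀}.ncard := by
  have := trunc_relCount_core (hw := hw) (hanc := hanc) u w₀ hw
    (by rw [h]; exact hanc)
    (trunc_hlab_pos h)
  rw [this, h]

lemma trunc_relCount_other (u : (T.trunc u₀ w₀ hw hanc).t.V) (h : u.1 ≠ u₀)
    (hu : (T.trunc u₀ w₀ hw hanc).t.IsLeaf u) :
    (T.trunc u₀ w₀ hw hanc).relCount u = T.relCount u.1 := by
  have hleaf : T.t.IsLeaf u.1 := by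
    rcases RTree.truncT_leaf_iff.1 hu with h' | h'
    · exact absurd h' h
    · exact h'
  have := trunc_relCount_core (hw := hw) (hanc := hanc) u u.1 hleaf (T.t.anc_refl u.1)
    (trunc_hlab_neg h)
  rw [this]
  unfold relCount
  congr 1
  ext a
  simp only [Set.mem_setOf_eq]
  exact ⟨fun ⟨h1, _⟩ => h1, fun h1 => ⟨h1, h1.2.1⟩⟩

end AmbTree

namespace RTree

lemma emb_iterate {t1 t : RTree} (e : t1.V → t.V) (hroot : e t1.root = t.root)
    (hpar : ∀ v : t1.V, v ≠ t1.root → e (t1.parent v) = t.parent (e v)) :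
    ∀ (k : ℕ) (v : t1.V), e (t1.parent^[k] v) = t.parent^[k] (e v) := by
  intro k
  induction k with
  | zero => intro v; rfl
  | succ k ih =>
    intro v
    rw [Function.iterate_succ_apply', Function.iterate_succ_apply']
    by_cases h : t1.parent^[k] v = t1.root
    · rw [h, t1.parent_root, hroot, ← ih v, h, hroot, t.parent_root]
    · rw [hpar _ h, ih v]

end RTree

namespace AmbTree

variable {X Y : Type} {H : Set (X → Set Y)}

lemma prunedSubtree_refl (T : AmbTree X Y H) : T.IsPrunedSubtree T :=
  ⟨id, fun _ _ h => h, rfl, fun _ _ => rfl, fun _ _ => rfl, fun _ _ => rfl,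
    fun _ => Iff.rfl, fun u hu => ⟨u, hu, T.t.anc_refl u, rfl⟩⟩

lemma prunedSubtree_trans {T2 T1 T : AmbTree X Y H}
    (h21 : T2.IsPrunedSubtree T1) (h10 : T1.IsPrunedSubtree T) :
    T2.IsPrunedSubtree T := by
  obtain ⟨e, einj, eroot, epar, ex, ey, eE0, eleaf⟩ := h21
  obtain ⟨f, finj, froot, fpar, fx, fy, fE0, fleaf⟩ := h10
  have fanc : ∀ {a v : T1.t.V}, T1.t.Anc a v → T.t.Anc (f a) (f v) := by
    rintro a v ⟨k, hk⟩
    exact ⟨k, by rw [← RTree.emb_iterate f froot fpar k v, hk]⟩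
  have enroot : ∀ v : T2.t.V, v ≠ T2.t.root → e v ≠ T1.t.root := by
    intro v hv h
    exact hv (einj (by rw [h, ← eroot]))
  have echild : ∀ v c : T2.t.V, c ∈ T2.t.children v → e c ∈ T1.t.children (e v) := by
    rintro v c ⟨hc1, hc2⟩
    exact ⟨by rw [← epar c hc2, hc1], enroot c hc2⟩
  have eleafrev : ∀ v : T2.t.V, T1.t.IsLeaf (e v) → T2.t.IsLeaf v := by
    intro v hL
    rw [RTree.IsLeaf, Set.eq_empty_iff_forall_notMem]
    intro c hc
    rw [RTree.IsLeaf, Set.eq_empty_iff_forall_notMem] at hL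
    exact hL (e c) (echild v c hc)
  refine ⟨f ∘ e, finj.comp einj, by simp only [Function.comp_apply, eroot, froot], ?_, ?_, ?_, ?_, ?_⟩
  · intro v hv
    simp only [Function.comp_apply]
    rw [epar v hv, fpar _ (enroot v hv)]
  · intro v hv
    simp only [Function.comp_apply]
    rw [ex v hv, fx _ (fun hL => hv (eleafrev v hL))]
  · intro v hv
    simp only [Function.comp_apply]
    rw [ey v hv, fy _ (enroot v hv)]
  · intro v
    exact (eE0 v).trans (fE0 (e v))
  · intro u hu
    obtain ⟨w1, hw1leaf, hw1anc, hw1lab⟩ := eleaf u hu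
    obtain ⟨w, hwleaf, hwanc, hwlab⟩ := fleaf w1 hw1leaf
    exact ⟨w, hwleaf, T.t.anc_trans (fanc hw1anc) hwanc, hw1lab.trans hwlab⟩

lemma nat_ivt : ∀ (N : ℕ) (g : ℕ → ℕ) (r : ℕ), (∀ j, g j ≤ g (j + 1) + 1) →
    g N ≤ r → r ≤ g 0 → ∃ j, g j = r := by
  intro N
  induction N with
  | zero =>
    intro g r _ h1 h2
    exact ⟨0, le_antisymm h1 h2⟩
  | succ N ih =>
    intro g r hstep hN h0
    by_cases hc : r ≤ g 1
    · obtain ⟨j, hj⟩ := ih (fun j => g (j + 1)) r (fun j => hstep (j + 1)) hN hc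
      exact ⟨j + 1, hj⟩
    · have h01 := hstep 0
      rw [Nat.zero_add] at h01
      exact ⟨0, by omega⟩

end AmbTree

/-- uniform-rank pruning. Every ambiguous shattered `H`-tree `T` has
an `H`-subtree `T'` in which every leaf has exactly `Rank(T)` relevant edges. -/
theorem uniform_rank_pruning {X Y : Type} (H : Set (X → Set Y)) (T : AmbTree X Y H) :
    ∃ T' : AmbTree X Y H, T'.IsPrunedSubtree T ∧
      ∀ u : T'.t.V, T'.t.IsLeaf u → T'.relCount u = T.rank := by
    classical
  suffices h : ∀ (n : ℕ) (T : AmbTree X Y H), @Fintype.card T.t.V T.t.fin = n →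
      ∃ T' : AmbTree X Y H, T'.IsPrunedSubtree T ∧
        ∀ u : T'.t.V, T'.t.IsLeaf u → T'.relCount u = T.rank from h _ T rfl
  intro n
  induction n using Nat.strong_induction_on with
  | _ n ih =>
    intro T hcard
    by_cases hall : ∀ u : T.t.V, T.t.IsLeaf u → T.relCount u = T.rank
    · exact ⟨T, AmbTree.prunedSubtree_refl T, hall⟩
    · push_neg at hall
      obtain ⟨w, hwleaf, hwne⟩ := hall
      letI := T.t.fin
      have hge : T.rank ≤ T.relCount w := Nat.sInf_le ⟨w, hwleaf, rfl⟩
      have hgt : T.rank < T.relCount w := lt_of_le_of_ne hge (fun h => hwne h.symm)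
      -- counting function along the path from w to the root
      have hstep : ∀ j : ℕ,
          {a : T.t.V | T.Relevant a w ∧ T.t.Anc a (T.t.parent^[j] w)}.ncard ≤
          {a : T.t.V | T.Relevant a w ∧ T.t.Anc a (T.t.parent^[j+1] w)}.ncard + 1 := by
        intro j
        have hsub : {a : T.t.V | T.Relevant a w ∧ T.t.Anc a (T.t.parent^[j] w)} ⊆
            insert (T.t.parent^[j] w)
              {a : T.t.V | T.Relevant a w ∧ T.t.Anc a (T.t.parent^[j+1] w)} := by
          rintro a ⟨h1, h2⟩
          rcases T.t.anc_step h2 with h | h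
          · exact Set.mem_insert_iff.2 (Or.inl h)
          · refine Set.mem_insert_iff.2 (Or.inr ⟨h1, ?_⟩)
            rw [Function.iterate_succ_apply']
            exact h
        calc {a : T.t.V | T.Relevant a w ∧ T.t.Anc a (T.t.parent^[j] w)}.ncard
            ≤ _ := Set.ncard_le_ncard hsub (Set.toFinite _)
          _ ≤ _ + 1 := Set.ncard_insert_le _ _
      have hS0 : {a : T.t.V | T.Relevant a w ∧ T.t.Anc a (T.t.parent^[0] w)}.ncard
          = T.relCount w := by
        unfold AmbTree.relCount
        congr 1
        ext a
        simp only [Set.mem_setOf_eq, Function.iterate_zero_apply]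
        exact ⟨fun h => h.1, fun h => ⟨h, h.2.1⟩⟩
      obtain ⟨m, hm⟩ := T.t.reaches w
      have hSm : {a : T.t.V | T.Relevant a w ∧ T.t.Anc a (T.t.parent^[m] w)}.ncard = 0 := by
        rw [show {a : T.t.V | T.Relevant a w ∧ T.t.Anc a (T.t.parent^[m] w)} = ∅ from ?_]
        · exact Set.ncard_empty _
        · rw [Set.eq_empty_iff_forall_notMem]
          rintro a ⟨h1, h2⟩
          rw [hm] at h2
          exact h1.1 (T.t.anc_root_eq h2)
      obtain ⟨j, hj⟩ := AmbTree.nat_ivt m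
        (fun j => {a : T.t.V | T.Relevant a w ∧ T.t.Anc a (T.t.parent^[j] w)}.ncard)
        T.rank hstep
        (by show {a : T.t.V | T.Relevant a w ∧ T.t.Anc a (T.t.parent^[m] w)}.ncard ≤ T.rank
            rw [hSm]
            exact Nat.zero_le _)
        (by show T.rank ≤ {a : T.t.V | T.Relevant a w ∧ T.t.Anc a (T.t.parent^[0] w)}.ncard
            rw [hS0]
            exact le_of_lt hgt)
      have hj' : {a : T.t.V | T.Relevant a w ∧ T.t.Anc a (T.t.parent^[j] w)}.ncard
          = T.rank := hj
      have hancu : T.t.Anc (T.t.parent^[j] w) w := ⟨j, rfl⟩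
      have hwne0 : w ≠ T.t.parent^[j] w := by
        intro h
        rw [← h] at hj'
        rw [show {a : T.t.V | T.Relevant a w ∧ T.t.Anc a w}
            = {a : T.t.V | T.Relevant a w} from ?_] at hj'
        · exact absurd hj'.symm (ne_of_lt hgt)
        · ext a
          simp only [Set.mem_setOf_eq]
          exact ⟨fun h' => h'.1, fun h' => ⟨h', h'.2.1⟩⟩
      have hbelow : T.t.SBelow (T.t.parent^[j] w) w := ⟨hancu, hwne0⟩
      -- the truncated tree
      have hkept : ¬ T.t.SBelow (T.t.parent^[j] w) (T.t.parent^[j] w) :=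
        fun h => h.2 rfl
      have hcardlt : @Fintype.card (T.trunc (T.t.parent^[j] w) w hwleaf hancu).t.V
          (T.trunc (T.t.parent^[j] w) w hwleaf hancu).t.fin < n := by
        rw [← hcard]
        have h2 : @Fintype.card (T.trunc (T.t.parent^[j] w) w hwleaf hancu).t.V
            (T.trunc (T.t.parent^[j] w) w hwleaf hancu).t.fin
            = Fintype.card {v : T.t.V // ¬ T.t.SBelow (T.t.parent^[j] w) v} := by
          congr 1
          exact Subsingleton.elim _ _
        rw [h2]
        exact Fintype.card_subtype_lt
          (p := fun v => ¬ T.t.SBelow (T.t.parent^[j] w) v) (x := w)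
          (not_not_intro hbelow)
      have hu0leaf : (T.trunc (T.t.parent^[j] w) w hwleaf hancu).t.IsLeaf
          ⟨T.t.parent^[j] w, hkept⟩ := AmbTree.trunc_leaf_iff.2 (Or.inl rfl)
      have hu0count : (T.trunc (T.t.parent^[j] w) w hwleaf hancu).relCount
          ⟨T.t.parent^[j] w, hkept⟩ = T.rank :=
        (AmbTree.trunc_relCount_u0 (T := T) (u₀ := T.t.parent^[j] w) (w₀ := w)
          (hw := hwleaf) (hanc := hancu) ⟨T.t.parent^[j] w, hkept⟩ rfl).trans hj'
      have hrank1 : (T.trunc (T.t.parent^[j] w) w hwleaf hancu).rank = T.rank := by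
        have hmem1 : T.rank ∈ {n : ℕ | ∃ u : (T.trunc (T.t.parent^[j] w) w hwleaf hancu).t.V,
            (T.trunc (T.t.parent^[j] w) w hwleaf hancu).t.IsLeaf u ∧
            n = (T.trunc (T.t.parent^[j] w) w hwleaf hancu).relCount u} := by
          refine ⟨⟨T.t.parent^[j] w, hkept⟩, hu0leaf, hu0count.symm⟩
        apply le_antisymm
        · exact Nat.sInf_le hmem1
        · apply le_csInf ⟨T.rank, hmem1⟩
          rintro b ⟨u, huleaf, rfl⟩
          by_cases h : u.1 = T.t.parent^[j] w
          · rw [AmbTree.trunc_relCount_u0 u h, hj']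
          · rw [AmbTree.trunc_relCount_other u h huleaf]
            have huleafT : T.t.IsLeaf u.1 := by
              rcases AmbTree.trunc_leaf_iff.1 huleaf with h' | h'
              · exact absurd h' h
              · exact h'
            exact Nat.sInf_le ⟨u.1, huleafT, rfl⟩
      obtain ⟨T2, hsub, huni⟩ := ih _ hcardlt (T.trunc (T.t.parent^[j] w) w hwleaf hancu) rfl
      exact ⟨T2, AmbTree.prunedSubtree_trans hsub AmbTree.trunc_isPruned,
        fun u hu => (huni u hu).trans hrank1⟩
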